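/- In the setting of the previous identity (σ : ℝ^d → ℝ^{d×m} of class C², Z : [0,T] → ℝ^m of class C¹, and X^i_{st}, 𝕃^i_{st}, B¹_{st}, B²_{st} defined from σ and Z via ℤ^{μν}_{st} = ∫_s^t ż^μ(r)(Z^ν(r) − Z^ν(s)) dr), assume additionally that the vector fields σ̂_μ = Σ_j σ^j_μ ∂_j commute pairwise, i.e. Σ_j (σ^j_ν ∂_j σ^i_μ − σ^j_μ ∂_j σ^i_ν) = 0 on ℝ^d for all i, μ, ν. Then the bracket vanishes: for every twice continuously differentiable f : ℝ^d → ℝ and every (s,t) ∈ Δ_T, B²_{st} f = ½ B¹_{st}(B¹_{st} f) pointwise on ℝ^d. -/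

import Mathlib

/-- The `i`-th partial derivative of `f : ℝ^d → ℝ` at `x`. -/
noncomputable def partialD (d : ℕ) (f : (Fin d → ℝ) → ℝ) (i : Fin d)
    (x : Fin d → ℝ) : ℝ :=
  fderiv ℝ f x (Pi.single i 1)

/-- The iterated integral `ℤ^{μν}_{st} = ∫_s^t ż^μ(r) (Z^ν(r) − Z^ν(s)) dr`. -/
noncomputable def iterZ (m : ℕ) (Z zdot : ℝ → Fin m → ℝ) (s t : ℝ)
    (μ ν : Fin m) : ℝ :=
  ∫ r in s..t, zdot r μ * (Z r ν - Z s ν)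

/-- The coefficient `X^i_{st}(x) = Σ_μ σ^i_μ(x)(Z^μ(t) − Z^μ(s))`. -/
noncomputable def Xcoeff (d m : ℕ) (σ : (Fin d → ℝ) → Fin d → Fin m → ℝ)
    (Z : ℝ → Fin m → ℝ) (s t : ℝ) (x : Fin d → ℝ) (i : Fin d) : ℝ :=
  ∑ μ : Fin m, σ x i μ * (Z t μ - Z s μ)

/-- The coefficient `𝕃^i_{st}(x) = Σ_{μ,ν,j} ℤ^{μν}_{st} ∂_j σ^i_μ(x) σ^j_ν(x)`. -/
noncomputable def Lcoeff (d m : ℕ) (σ : (Fin d → ℝ) → Fin d → Fin m → ℝ)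
    (Z zdot : ℝ → Fin m → ℝ) (s t : ℝ) (x : Fin d → ℝ) (i : Fin d) : ℝ :=
  ∑ μ : Fin m, ∑ ν : Fin m, ∑ j : Fin d,
    iterZ m Z zdot s t μ ν * partialD d (fun y => σ y i μ) j x * σ x j ν

/-- The first-order operator `B¹_{st} f = Σ_i X^i_{st} ∂_i f`. -/
noncomputable def opB1 (d m : ℕ) (σ : (Fin d → ℝ) → Fin d → Fin m → ℝ)
    (Z : ℝ → Fin m → ℝ) (s t : ℝ) (f : (Fin d → ℝ) → ℝ) (x : Fin d → ℝ) : ℝ :=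
  ∑ i : Fin d, Xcoeff d m σ Z s t x i * partialD d f i x

/-- The second-order operator
`B²_{st} f = ½ Σ_{i,j} X^i_{st} X^j_{st} ∂_{ij} f + Σ_i 𝕃^i_{st} ∂_i f`. -/
noncomputable def opB2 (d m : ℕ) (σ : (Fin d → ℝ) → Fin d → Fin m → ℝ)
    (Z zdot : ℝ → Fin m → ℝ) (s t : ℝ) (f : (Fin d → ℝ) → ℝ) (x : Fin d → ℝ) : ℝ :=
  (1 / 2) * ∑ i : Fin d, ∑ j : Fin d,
      Xcoeff d m σ Z s t x i * Xcoeff d m σ Z s t x j *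
        partialD d (fun y => partialD d f j y) i x
    + ∑ i : Fin d, Lcoeff d m σ Z zdot s t x i * partialD d f i x

/- auxiliary lemmas -/

lemma chen_aux (m : ℕ) (Z zdot : ℝ → Fin m → ℝ)
    (hZ : ∀ (μ : Fin m) (r : ℝ), HasDerivAt (fun u => Z u μ) (zdot r μ) r)
    (hzdot : ∀ μ : Fin m, Continuous fun r => zdot r μ)
    (s t : ℝ) (μ ν : Fin m) :
    iterZ m Z zdot s t μ ν + iterZ m Z zdot s t ν μ
      = (Z t μ - Z s μ) * (Z t ν - Z s ν) := by
  have hZc : ∀ κ : Fin m, Continuous fun r => Z r κ := fun κ =>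
    continuous_iff_continuousAt.mpr fun r => (hZ κ r).continuousAt
  have key : ∀ r : ℝ, HasDerivAt (fun u => (Z u μ - Z s μ) * (Z u ν - Z s ν))
      (zdot r μ * (Z r ν - Z s ν) + zdot r ν * (Z r μ - Z s μ)) r := by
    intro r
    have h1 := ((hZ μ r).sub_const (Z s μ)).mul ((hZ ν r).sub_const (Z s ν))
    exact h1.congr_deriv (by ring)
  have hc1 : Continuous fun r => zdot r μ * (Z r ν - Z s ν) :=
    (hzdot μ).mul ((hZc ν).sub continuous_const)
  have hc2 : Continuous fun r => zdot r ν * (Z r μ - Z s μ) :=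
    (hzdot ν).mul ((hZc μ).sub continuous_const)
  have hint := intervalIntegral.integral_eq_sub_of_hasDerivAt
    (f := fun u => (Z u μ - Z s μ) * (Z u ν - Z s ν))
    (fun r _ => key r) ((hc1.add hc2).intervalIntegrable s t)
  have hsplit : (∫ r in s..t, (zdot r μ * (Z r ν - Z s ν) + zdot r ν * (Z r μ - Z s μ)))
      = iterZ m Z zdot s t μ ν + iterZ m Z zdot s t ν μ :=
    intervalIntegral.integral_add (hc1.intervalIntegrable s t) (hc2.intervalIntegrable s t)
  rw [← hsplit, hint]; ring

lemma partialD_finsum {d : ℕ} {ι : Type*} (u : Finset ι) (g : ι → (Fin d → ℝ) → ℝ)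
    (i : Fin d) (x : Fin d → ℝ) (h : ∀ k ∈ u, DifferentiableAt ℝ (g k) x) :
    partialD d (fun y => ∑ k ∈ u, g k y) i x = ∑ k ∈ u, partialD d (g k) i x := by
  unfold partialD
  rw [fderiv_fun_sum h, ContinuousLinearMap.sum_apply]

lemma partialD_mul {d : ℕ} (a b : (Fin d → ℝ) → ℝ) (i : Fin d) (x : Fin d → ℝ)
    (ha : DifferentiableAt ℝ a x) (hb : DifferentiableAt ℝ b x) :
    partialD d (fun y => a y * b y) i x
      = partialD d a i x * b x + a x * partialD d b i x := by
  unfold partialD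
  rw [fderiv_fun_mul ha hb]
  simp only [ContinuousLinearMap.add_apply, ContinuousLinearMap.smul_apply, smul_eq_mul]
  ring

lemma partialD_mul_const {d : ℕ} (a : (Fin d → ℝ) → ℝ) (c : ℝ) (i : Fin d)
    (x : Fin d → ℝ) (ha : DifferentiableAt ℝ a x) :
    partialD d (fun y => a y * c) i x = partialD d a i x * c := by
  unfold partialD
  rw [fderiv_mul_const ha]
  simp [mul_comm]

lemma sigma_comp (d m : ℕ) (σ : (Fin d → ℝ) → Fin d → Fin m → ℝ)
    (hσ : ContDiff ℝ 2 fun x => σ x) (j : Fin d) (μ : Fin m) :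
    ContDiff ℝ 2 fun x => σ x j μ :=
  (contDiff_pi.mp (contDiff_pi.mp hσ j) μ)

lemma pdf_contDiff (d : ℕ) (f : (Fin d → ℝ) → ℝ) (hf : ContDiff ℝ 2 f) (j : Fin d) :
    ContDiff ℝ 1 fun y => partialD d f j y := by
  unfold partialD
  exact (hf.fderiv_right (by norm_num)).clm_apply contDiff_const

lemma partialD_opB1 (d m : ℕ) (σ : (Fin d → ℝ) → Fin d → Fin m → ℝ)
    (hσ : ContDiff ℝ 2 fun x => σ x) (Z : ℝ → Fin m → ℝ) (s t : ℝ)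
    (f : (Fin d → ℝ) → ℝ) (hf : ContDiff ℝ 2 f) (i : Fin d) (x : Fin d → ℝ) :
    partialD d (fun y => opB1 d m σ Z s t f y) i x
      = ∑ j : Fin d,
          ((∑ μ : Fin m, partialD d (fun y => σ y j μ) i x * (Z t μ - Z s μ))
              * partialD d f j x
            + Xcoeff d m σ Z s t x j
              * partialD d (fun y => partialD d f j y) i x) := by
  have hσd : ∀ (j : Fin d) (μ : Fin m), DifferentiableAt ℝ (fun y => σ y j μ) x :=
    fun j μ => (sigma_comp d m σ hσ j μ).differentiable (by norm_num) x
  have hXd : ∀ j : Fin d, DifferentiableAt ℝ (fun y => Xcoeff d m σ Z s t y j) x := by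
    intro j
    exact DifferentiableAt.fun_sum fun μ _ => (hσd j μ).mul_const _
  have hPd : ∀ j : Fin d, DifferentiableAt ℝ (fun y => partialD d f j y) x := fun j =>
    ((pdf_contDiff d f hf j).differentiable (by norm_num)) x
  unfold opB1
  rw [partialD_finsum _ _ _ _ (fun j _ => (hXd j).fun_mul (hPd j))]
  refine Finset.sum_congr rfl fun j _ => ?_
  rw [partialD_mul _ _ _ _ (hXd j) (hPd j)]
  have hX : partialD d (fun y => Xcoeff d m σ Z s t y j) i x
      = ∑ μ : Fin m, partialD d (fun y => σ y j μ) i x * (Z t μ - Z s μ) := by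
    unfold Xcoeff
    rw [partialD_finsum _ _ _ _ (fun μ _ => (hσd j μ).mul_const _)]
    exact Finset.sum_congr rfl fun μ _ => partialD_mul_const _ _ _ _ (hσd j μ)
  rw [hX]

/-- If the vector fields `σ̂_μ = Σ_j σ^j_μ ∂_j` commute pairwise, then the bracket of
the canonical lift vanishes: `B²_{st} f = ½ B¹_{st}(B¹_{st} f)` for every `C²`
function `f` and every `(s,t) ∈ Δ_T`. -/
theorem bracket_vanishes_of_commuting (T : ℝ) (hT : 0 < T) (d m : ℕ)
    (σ : (Fin d → ℝ) → Fin d → Fin m → ℝ) (hσ : ContDiff ℝ 2 fun x => σ x)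
    (Z zdot : ℝ → Fin m → ℝ)
    (hZ : ∀ (μ : Fin m) (r : ℝ), HasDerivAt (fun u => Z u μ) (zdot r μ) r)
    (hzdot : ∀ μ : Fin m, Continuous fun r => zdot r μ)
    (hcomm : ∀ (i : Fin d) (μ ν : Fin m) (x : Fin d → ℝ),
      ∑ j : Fin d, (σ x j ν * partialD d (fun y => σ y i μ) j x
        - σ x j μ * partialD d (fun y => σ y i ν) j x) = 0) :
    ∀ f : (Fin d → ℝ) → ℝ, ContDiff ℝ 2 f →
      ∀ s t : ℝ, 0 ≤ s → s ≤ t → t ≤ T → ∀ x : Fin d → ℝ,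
        opB2 d m σ Z zdot s t f x
          = (1 / 2) * opB1 d m σ Z s t (fun y => opB1 d m σ Z s t f y) x := by
  intro f hf s t hs hst htT x
  -- notation
  set X : Fin d → ℝ := fun i => Xcoeff d m σ Z s t x i with hXdef
  -- key algebraic identity
  have key : ∀ j : Fin d,
      ∑ i : Fin d, X i *
        (∑ μ : Fin m, partialD d (fun y => σ y j μ) i x * (Z t μ - Z s μ))
      = 2 * Lcoeff d m σ Z zdot s t x j := by
    intro j
    set P : Fin d → Fin m → ℝ := fun i μ => partialD d (fun y => σ y j μ) i x with hPdef
    set δ : Fin m → ℝ := fun μ => Z t μ - Z s μ with hδdef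
    set A : Fin m → Fin m → ℝ := fun μ ν => ∑ i : Fin d, σ x i ν * P i μ with hAdef
    have hA : ∀ μ ν : Fin m, A μ ν = A ν μ := by
      intro μ ν
      have h := hcomm j μ ν x
      rw [Finset.sum_sub_distrib, sub_eq_zero] at h
      simpa [hAdef, hPdef] using h
    have step1 : (∑ i : Fin d, X i * ∑ μ : Fin m, P i μ * δ μ)
        = ∑ ν : Fin m, ∑ μ : Fin m, (δ μ * δ ν) * A μ ν := by
      calc (∑ i : Fin d, X i * ∑ μ : Fin m, P i μ * δ μ)
          = ∑ i : Fin d, ∑ ν : Fin m, ∑ μ : Fin m, (σ x i ν * δ ν) * (P i μ * δ μ) := by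
            refine Finset.sum_congr rfl fun i _ => ?_
            rw [hXdef]
            simp only [Xcoeff, ← hδdef]
            rw [Finset.sum_mul_sum]
        _ = ∑ ν : Fin m, ∑ μ : Fin m, ∑ i : Fin d, (σ x i ν * δ ν) * (P i μ * δ μ) := by
            rw [Finset.sum_comm]
            exact Finset.sum_congr rfl fun ν _ => Finset.sum_comm
        _ = ∑ ν : Fin m, ∑ μ : Fin m, (δ μ * δ ν) * A μ ν := by
            refine Finset.sum_congr rfl fun ν _ => Finset.sum_congr rfl fun μ _ => ?_
            rw [hAdef]
            simp only [Finset.mul_sum]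
            exact Finset.sum_congr rfl fun i _ => by ring
    have step2 : (∑ ν : Fin m, ∑ μ : Fin m, (δ μ * δ ν) * A μ ν)
        = (∑ ν : Fin m, ∑ μ : Fin m, iterZ m Z zdot s t μ ν * A μ ν)
          + ∑ ν : Fin m, ∑ μ : Fin m, iterZ m Z zdot s t ν μ * A μ ν := by
      rw [← Finset.sum_add_distrib]
      refine Finset.sum_congr rfl fun ν _ => ?_
      rw [← Finset.sum_add_distrib]
      refine Finset.sum_congr rfl fun μ _ => ?_
      rw [hδdef]
      simp only [← chen_aux m Z zdot hZ hzdot s t μ ν]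
      ring
    have step3 : (∑ ν : Fin m, ∑ μ : Fin m, iterZ m Z zdot s t ν μ * A μ ν)
        = ∑ ν : Fin m, ∑ μ : Fin m, iterZ m Z zdot s t μ ν * A μ ν := by
      have : (∑ ν : Fin m, ∑ μ : Fin m, iterZ m Z zdot s t ν μ * A μ ν)
          = ∑ ν : Fin m, ∑ μ : Fin m, iterZ m Z zdot s t ν μ * A ν μ := by
        refine Finset.sum_congr rfl fun ν _ => Finset.sum_congr rfl fun μ _ => ?_
        rw [hA]
      rw [this, Finset.sum_comm]
    have step4 : (∑ ν : Fin m, ∑ μ : Fin m, iterZ m Z zdot s t μ ν * A μ ν)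
        = Lcoeff d m σ Z zdot s t x j := by
      rw [Finset.sum_comm]
      unfold Lcoeff
      refine Finset.sum_congr rfl fun μ _ => Finset.sum_congr rfl fun ν _ => ?_
      rw [hAdef]
      simp only [Finset.mul_sum, ← hPdef]
      exact Finset.sum_congr rfl fun i _ => by ring
    calc (∑ i : Fin d, X i * ∑ μ : Fin m, P i μ * δ μ)
        = _ := step1
      _ = _ := step2
      _ = Lcoeff d m σ Z zdot s t x j + Lcoeff d m σ Z zdot s t x j := by
          rw [step3, step4]
      _ = 2 * Lcoeff d m σ Z zdot s t x j := by ring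
  -- expand the right-hand side
  have expand : opB1 d m σ Z s t (fun y => opB1 d m σ Z s t f y) x
      = (∑ i : Fin d, ∑ j : Fin d, X i *
          ((∑ μ : Fin m, partialD d (fun y => σ y j μ) i x * (Z t μ - Z s μ))
            * partialD d f j x))
        + ∑ i : Fin d, ∑ j : Fin d, X i * X j *
            partialD d (fun y => partialD d f j y) i x := by
    calc opB1 d m σ Z s t (fun y => opB1 d m σ Z s t f y) x
        = ∑ i : Fin d, X i * partialD d (fun y => opB1 d m σ Z s t f y) i x := rfl
      _ = ∑ i : Fin d, X i * ∑ j : Fin d,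
            ((∑ μ : Fin m, partialD d (fun y => σ y j μ) i x * (Z t μ - Z s μ))
                * partialD d f j x
              + X j * partialD d (fun y => partialD d f j y) i x) := by
          refine Finset.sum_congr rfl fun i _ => ?_
          rw [partialD_opB1 d m σ hσ Z s t f hf i x]
      _ = _ := by
          rw [← Finset.sum_add_distrib]
          refine Finset.sum_congr rfl fun i _ => ?_
          rw [Finset.mul_sum, ← Finset.sum_add_distrib]
          refine Finset.sum_congr rfl fun j _ => ?_
          ring
  -- conclude
  unfold opB2
  rw [expand]
  have hL : (∑ i : Fin d, Lcoeff d m σ Z zdot s t x i * partialD d f i x)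
      = (1 / 2) * ∑ i : Fin d, ∑ j : Fin d, X i *
          ((∑ μ : Fin m, partialD d (fun y => σ y j μ) i x * (Z t μ - Z s μ))
            * partialD d f j x) := by
    rw [Finset.sum_comm]
    rw [Finset.mul_sum]
    refine Finset.sum_congr rfl fun j _ => ?_
    have := key j
    calc Lcoeff d m σ Z zdot s t x j * partialD d f j x
        = (1/2) * (2 * Lcoeff d m σ Z zdot s t x j) * partialD d f j x := by ring
      _ = (1/2) * (∑ i : Fin d, X i *
            (∑ μ : Fin m, partialD d (fun y => σ y j μ) i x * (Z t μ - Z s μ)))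
            * partialD d f j x := by rw [this]
      _ = (1/2) * ∑ i : Fin d, X i *
            ((∑ μ : Fin m, partialD d (fun y => σ y j μ) i x * (Z t μ - Z s μ))
              * partialD d f j x) := by
          rw [mul_assoc, Finset.sum_mul]
          congr 1
          exact Finset.sum_congr rfl fun i _ => by ring
  rw [hL]
  ring
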